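/- Let a1, c, mu0, mu1, σ > 0 and b ∈ ℝ with 0 < a1 < 2c. Set E = 4·a1³·mu1⁴·σ − 4·a1²·b·mu1³·σ − a1²·mu0²·mu1² − 4·a1²·mu0·mu1²·σ + 8·a1²·mu1²·σ + 2·a1·b·mu0·mu1 − 4·a1·b·mu1·σ − 4·a1·mu0·σ + 4·a1·σ − b², and assume E·(c − a1) > 0. Define B = (a1·mu0·mu1 − b)/(2·a1·σ·(a1·mu1² + 1)), ω = −((a1·mu1²·σ − b·mu1 − mu0 + σ)·mu1)/(a1·mu1² + 1), λ = √(E/(−16·a1·σ²·(a1 − c)·(a1·mu1² + 1)²)), d0 = √(a1·(2c − a1))·E/(4·a1·σ·(a1·mu1² + 1)²·(a1 − c)), d2 = −3·√(a1·(2c − a1))·E/(8·a1·σ·(a1·mu1² + 1)²·(a1 − c)), h2 = −3·E/(8·σ·(a1·mu1² + 1)²·(a1 − c)), and h0 = (4·a1⁴·mu1⁴·σ² − 4·a1³·c·mu1⁴·σ² − 4·a1³·b·mu1³·σ + 4·a1²·b·c·mu1³·σ − a1³·mu0²·mu1² − 4·a1³·mu0·mu1²·σ + 8·a1³·mu1²·σ²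 + a1²·c·mu0²·mu1² + 4·a1²·c·mu0·mu1²·σ − 8·a1²·c·mu1²·σ² + 2·a1²·b·mu0·mu1 − 4·a1²·b·mu1·σ − 2·a1·b·c·mu0·mu1 + 4·a1·b·c·mu1·σ − 4·a1²·mu0·σ + 4·a1²·σ² + 4·a1·c·mu0·σ − 4·a1·c·σ² − a1·b² + b²·c)/(4·a1·σ·(a1·mu1² + 1)²·(a1 − c)). Then f(ξ) = d0 + d2·sech²(λ·ξ) and g(ξ) = h0 + h2·sech²(λ·ξ) satisfy the Schrödinger BBM–BBM associated ODE system with parameters a1, c, mu0, mu1, b, wave speed σ, and phase shifts B, ω. -/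

import Mathlib

private lemma coshL (L x : ℝ) :
    HasDerivAt (fun ξ : ℝ => Real.cosh (L*ξ)) (L * Real.sinh (L*x)) x := by
  simpa [mul_comm] using ((hasDerivAt_id x).const_mul L).cosh

private lemma sinhL (L x : ℝ) :
    HasDerivAt (fun ξ : ℝ => Real.sinh (L*ξ)) (L * Real.cosh (L*x)) x := by
  simpa [mul_comm] using ((hasDerivAt_id x).const_mul L).sinh

private lemma hdF0 (p q L x : ℝ) :
    HasDerivAt (fun ξ : ℝ => p + q * (1/Real.cosh (L*ξ))^2)
      (-2*q*L * Real.tanh (L*x) * (1/Real.cosh (L*x))^2) x := by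
  have hc : Real.cosh (L*x) ≠ 0 := (Real.cosh_pos (L*x)).ne'
  have h1 := ((coshL L x).inv hc).pow 2
  have h2 := (h1.const_mul q).const_add p
  have he : (fun ξ : ℝ => p + q * (1/Real.cosh (L*ξ))^2)
      = fun ξ : ℝ => p + q * ((Real.cosh (L*ξ))⁻¹)^2 := by
    funext y; rw [one_div]
  rw [he]
  refine h2.congr_deriv ?_
  simp only [Pi.inv_apply, Pi.pow_apply, Pi.sub_apply]
  simp only [Nat.cast_ofNat, show (2:ℕ) - 1 = 1 from rfl, pow_one]
  rw [Real.tanh_eq_sinh_div_cosh]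
  field_simp

private lemma hdF1 (q L x : ℝ) :
    HasDerivAt (fun y : ℝ => -2*q*L * Real.tanh (L*y) * (1/Real.cosh (L*y))^2)
      (-2*q*L^2 * (1/Real.cosh (L*x))^2 * (1 - 3*Real.tanh (L*x)^2)) x := by
  have hc : ∀ y : ℝ, Real.cosh (L*y) ≠ 0 := fun y => (Real.cosh_pos (L*y)).ne'
  have he : (fun y : ℝ => -2*q*L * Real.tanh (L*y) * (1/Real.cosh (L*y))^2)
      = fun y : ℝ => (-2*q*L * Real.sinh (L*y)) / (Real.cosh (L*y))^3 := by
    funext y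
    rw [Real.tanh_eq_sinh_div_cosh]
    field_simp
  rw [he]
  have hnum := (sinhL L x).const_mul (-2*q*L)
  have hden := (coshL L x).pow 3
  have h := hnum.div hden (pow_ne_zero 3 (hc x))
  refine h.congr_deriv ?_
  simp only [Pi.inv_apply, Pi.pow_apply, Pi.sub_apply]
  rw [Real.tanh_eq_sinh_div_cosh]
  field_simp
  ring

private lemma hdF2 (q L x : ℝ) :
    HasDerivAt (fun y : ℝ => -2*q*L^2 * (1/Real.cosh (L*y))^2 * (1 - 3*Real.tanh (L*y)^2))
      (8*q*L^3 * Real.tanh (L*x) * (1/Real.cosh (L*x))^2 * (2 - 3*Real.tanh (L*x)^2)) x := by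
  have hc : ∀ y : ℝ, Real.cosh (L*y) ≠ 0 := fun y => (Real.cosh_pos (L*y)).ne'
  have he : (fun y : ℝ => -2*q*L^2 * (1/Real.cosh (L*y))^2 * (1 - 3*Real.tanh (L*y)^2))
      = fun y : ℝ => (-2*q*L^2 * (Real.cosh (L*y)^2 - 3*Real.sinh (L*y)^2)) / (Real.cosh (L*y))^4 := by
    funext y
    rw [Real.tanh_eq_sinh_div_cosh]
    field_simp
  rw [he]
  have hnum := (((coshL L x).pow 2).sub (((sinhL L x).pow 2).const_mul 3)).const_mul (-2*q*L^2)
  have hden := (coshL L x).pow 4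
  have h := hnum.div hden (pow_ne_zero 4 (hc x))
  refine h.congr_deriv ?_
  simp only [Pi.inv_apply, Pi.pow_apply, Pi.sub_apply]
  rw [Real.tanh_eq_sinh_div_cosh]
  field_simp
  ring

private lemma derivF0 (p q L : ℝ) :
    deriv (fun ξ : ℝ => p + q * (1/Real.cosh (L*ξ))^2)
      = fun x => -2*q*L * Real.tanh (L*x) * (1/Real.cosh (L*x))^2 :=
  funext fun x => (hdF0 p q L x).deriv

private lemma derivF0_two (p q L : ℝ) :
    iteratedDeriv 2 (fun ξ : ℝ => p + q * (1/Real.cosh (L*ξ))^2)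
      = fun x => -2*q*L^2 * (1/Real.cosh (L*x))^2 * (1 - 3*Real.tanh (L*x)^2) := by
  rw [iteratedDeriv_succ, iteratedDeriv_one, derivF0]
  exact funext fun x => (hdF1 q L x).deriv

private lemma derivF0_three (p q L : ℝ) :
    iteratedDeriv 3 (fun ξ : ℝ => p + q * (1/Real.cosh (L*ξ))^2)
      = fun x => 8*q*L^3 * Real.tanh (L*x) * (1/Real.cosh (L*x))^2 * (2 - 3*Real.tanh (L*x)^2) := by
  rw [iteratedDeriv_succ, derivF0_two]
  exact funext fun x => (hdF2 q L x).deriv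

set_option maxHeartbeats 2000000 in
theorem stmt_6
    (a1 c mu0 mu1 b : ℝ)
    (ha1 : 0 < a1) (hc : 0 < c) (hmu0 : 0 < mu0) (hmu1 : 0 < mu1)
    (σ : ℝ) (hσ : 0 < σ) (ha1lt : a1 < 2*c)
    (E : ℝ) (hE : E = 4*a1^3*mu1^4*σ - 4*a1^2*b*mu1^3*σ - a1^2*mu0^2*mu1^2 - 4*a1^2*mu0*mu1^2*σ + 8*a1^2*mu1^2*σ + 2*a1*b*mu0*mu1 - 4*a1*b*mu1*σ - 4*a1*mu0*σ + 4*a1*σ - b^2) (hEsgn : E * (c - a1) > 0)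
    (B ω lam d0 d2 h2 h0 : ℝ)
    (h_B : B = (a1*mu0*mu1 - b)/(2*a1*σ*(a1*mu1^2 + 1)))
    (h_ω : ω = -((a1*mu1^2*σ - b*mu1 - mu0 + σ)*mu1)/(a1*mu1^2 + 1))
    (h_lam : lam = Real.sqrt (E/(-16*a1*σ^2*(a1 - c)*(a1*mu1^2 + 1)^2)))
    (h_d0 : d0 = Real.sqrt (a1*(2*c - a1))*E/(4*a1*σ*(a1*mu1^2 + 1)^2*(a1 - c)))
    (h_d2 : d2 = -3*Real.sqrt (a1*(2*c - a1))*E/(8*a1*σ*(a1*mu1^2 + 1)^2*(a1 - c)))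
    (h_h2 : h2 = -3*E/(8*σ*(a1*mu1^2 + 1)^2*(a1 - c)))
    (h_h0 : h0 = (4*a1^4*mu1^4*σ^2 - 4*a1^3*c*mu1^4*σ^2 - 4*a1^3*b*mu1^3*σ + 4*a1^2*b*c*mu1^3*σ - a1^3*mu0^2*mu1^2 - 4*a1^3*mu0*mu1^2*σ + 8*a1^3*mu1^2*σ^2 + a1^2*c*mu0^2*mu1^2 + 4*a1^2*c*mu0*mu1^2*σ - 8*a1^2*c*mu1^2*σ^2 + 2*a1^2*b*mu0*mu1 - 4*a1^2*b*mu1*σ - 2*a1*b*c*mu0*mu1 + 4*a1*b*c*mu1*σ - 4*a1^2*mu0*σ + 4*a1^2*σ^2 + 4*a1*c*mu0*σ - 4*a1*c*σ^2 - a1*b^2 + b^2*c)/(4*a1*σ*(a1*mu1^2 + 1)^2*(a1 - c)))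
    (f g : ℝ → ℝ)
    (hfdef : ∀ ξ : ℝ, f ξ = d0 + d2 * (1/Real.cosh (lam*ξ))^2)
    (hgdef : ∀ ξ : ℝ, g ξ = h0 + h2 * (1/Real.cosh (lam*ξ))^2) :
    ∀ ξ : ℝ,
      (deriv f ξ * g ξ + f ξ * deriv g ξ + a1*σ * iteratedDeriv 3 f ξ + (mu0 + 2*a1*B*ω - 3*a1*B^2*σ - σ - 2*b*B) * deriv f ξ = 0) ∧
      ((B + mu1) * f ξ * g ξ + (3*a1*B*σ + b - a1*ω) * iteratedDeriv 2 f ξ + (ω + B*mu0 + a1*B^2*ω - a1*B^3*σ - B*σ - b*B^2) * f ξ = 0) ∧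
      (f ξ * deriv f ξ + g ξ * deriv g ξ + (c*σ) * iteratedDeriv 3 g ξ + (1 - σ) * deriv g ξ = 0) := by
  have hfF : f = fun ξ : ℝ => d0 + d2 * (1/Real.cosh (lam*ξ))^2 := funext hfdef
  have hgF : g = fun ξ : ℝ => h0 + h2 * (1/Real.cosh (lam*ξ))^2 := funext hgdef
  subst hfF hgF
  have ha1' : a1 ≠ 0 := ha1.ne'
  have hσ' : σ ≠ 0 := hσ.ne'
  have hA : (0:ℝ) < a1*mu1^2 + 1 := by positivity
  have hA' : a1*mu1^2 + 1 ≠ 0 := hA.ne'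
  have hca : c - a1 ≠ 0 := by
    intro h
    rw [h, mul_zero] at hEsgn
    exact lt_irrefl 0 hEsgn
  have hac : a1 - c ≠ 0 := fun h => hca (by linarith [sub_eq_zero.mp h])
  have hcsq : (0:ℝ) < (c - a1)^2 := sq_pos_of_ne_zero hca
  have hr2 : Real.sqrt (a1*(2*c - a1)) ^ 2 = a1*(2*c - a1) :=
    Real.sq_sqrt (by nlinarith)
  have hp16 : (0:ℝ) < 16*a1*σ^2*(a1*mu1^2 + 1)^2 := by positivity
  have hne : -16*a1*σ^2*(a1 - c)*(a1*mu1^2 + 1)^2 ≠ 0 := by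
    intro h
    have h2 : (a1 - c) * (-16*a1*σ^2*(a1*mu1^2 + 1)^2) = 0 := by linear_combination h
    rcases mul_eq_zero.mp h2 with h3 | h3
    · exact hac h3
    · nlinarith [hp16]
  have hargpos : (0:ℝ) ≤ E/(-16*a1*σ^2*(a1 - c)*(a1*mu1^2 + 1)^2) := by
    have h1 : E/(-16*a1*σ^2*(a1 - c)*(a1*mu1^2 + 1)^2)
        = (E*(c - a1))/((16*a1*σ^2*(a1*mu1^2 + 1)^2)*(c - a1)^2) := by
      rw [div_eq_div_iff hne (by positivity)]
      ring
    rw [h1]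
    exact le_of_lt (div_pos hEsgn (mul_pos hp16 hcsq))
  have hlam2 : lam^2 = E/(-16*a1*σ^2*(a1 - c)*(a1*mu1^2 + 1)^2) := by
    rw [h_lam]; exact Real.sq_sqrt hargpos
  -- key scalar identities
  have hd0' : d0 = -(2/3)*d2 := by
    rw [h_d0, h_d2]; field_simp; ring
  have hd2' : a1*d2 = Real.sqrt (a1*(2*c - a1)) * h2 := by
    rw [h_d2, h_h2]; field_simp
  have hd2sq : a1*d2^2 = (2*c - a1)*h2^2 := by
    have h2' : a1*(a1*d2^2) = a1*((2*c - a1)*h2^2) := by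
      linear_combination (a1*d2 + Real.sqrt (a1*(2*c - a1))*h2) * hd2' + h2^2 * hr2
    exact mul_left_cancel₀ ha1' h2'
  have hI1 : h2 = 6*a1*σ*lam^2 := by
    rw [h_h2, hlam2]; field_simp; ring
  have hI2 : (B + mu1)*(a1*σ) = 3*a1*B*σ + b - a1*ω := by
    rw [h_B, h_ω]; field_simp; ring
  have hI3 : (B + mu1)*h0 + (ω + B*mu0 + a1*B^2*ω - a1*B^3*σ - B*σ - b*B^2) = 0 := by
    rw [h_h0, h_B, h_ω]; field_simp; ring
  have hI4 : h0 + (mu0 + 2*a1*B*ω - 3*a1*B^2*σ - σ - 2*b*B) = 0 := by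
    rw [h_h0, h_B, h_ω]; field_simp; ring
  have hI5 : 2*(c - a1)*h2 = 3*a1*(h0 + 1 - σ) := by
    rw [h_h2, h_h0, hE]; field_simp; ring
  -- composite coefficient identities
  have hJ1a : -2*d2*h0 - 2*h2*d0 - 2*d2*(mu0 + 2*a1*B*ω - 3*a1*B^2*σ - σ - 2*b*B)
      - 8*a1*σ*d2*lam^2 = 0 := by
    linear_combination (-2*h2)*hd0' + ((4:ℝ)/3*d2)*hI1 + (-2*d2)*hI4
  have hJ1b : -4*d2*h2 + 24*a1*σ*d2*lam^2 = 0 := by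
    linear_combination (-4*d2)*hI1
  have hJ2a : (B + mu1)*d0*h0 + (ω + B*mu0 + a1*B^2*ω - a1*B^3*σ - B*σ - b*B^2)*d0 = 0 := by
    linear_combination d0*hI3
  have hJ2b : (B + mu1)*(d0*h2 + d2*h0) + 4*(3*a1*B*σ + b - a1*ω)*d2*lam^2
      + (ω + B*mu0 + a1*B^2*ω - a1*B^3*σ - B*σ - b*B^2)*d2 = 0 := by
    linear_combination ((B + mu1)*h2)*hd0' + (-(2:ℝ)/3*(B + mu1)*d2)*hI1 + (-4*d2*lam^2)*hI2 + d2*hI3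
  have hJ2c : (B + mu1)*d2*h2 - 6*(3*a1*B*σ + b - a1*ω)*d2*lam^2 = 0 := by
    linear_combination ((B + mu1)*d2)*hI1 + (6*d2*lam^2)*hI2
  have hJ3a : -2*d2*d0 - 2*h2*h0 - 8*c*σ*h2*lam^2 - 2*h2*(1 - σ) = 0 := by
    have h' : a1 * (-2*d2*d0 - 2*h2*h0 - 8*c*σ*h2*lam^2 - 2*h2*(1 - σ)) = a1 * 0 := by
      linear_combination (-2*a1*d2)*hd0' + (4:ℝ)/3*hd2sq + ((4:ℝ)/3*c*h2)*hI1 + ((2:ℝ)/3*h2)*hI5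
    exact mul_left_cancel₀ ha1' h'
  have hJ3b : -2*d2^2 - 2*h2^2 + 24*c*σ*h2*lam^2 = 0 := by
    have h' : a1 * (-2*d2^2 - 2*h2^2 + 24*c*σ*h2*lam^2) = a1 * 0 := by
      linear_combination (-2)*hd2sq + (-4*c*h2)*hI1
    exact mul_left_cancel₀ ha1' h'
  intro ξ
  have hT2 : Real.tanh (lam*ξ)^2 = 1 - (1/Real.cosh (lam*ξ))^2 := by
    have hC : Real.cosh (lam*ξ) ≠ 0 := (Real.cosh_pos (lam*ξ)).ne'
    rw [Real.tanh_eq_sinh_div_cosh]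
    field_simp
    linear_combination -(Real.cosh_sq_sub_sinh_sq (lam*ξ))
  simp only [derivF0, derivF0_two, derivF0_three]
  set T := Real.tanh (lam*ξ) with hTdef
  set S := (1/Real.cosh (lam*ξ))^2 with hSdef
  refine ⟨?_, ?_, ?_⟩
  · linear_combination (lam*T*S)*hJ1a + (lam*T*S*S)*hJ1b + (-24*a1*σ*d2*lam^3*T*S)*hT2
  · linear_combination hJ2a + S*hJ2b + S^2*hJ2c
      + (6*(3*a1*B*σ + b - a1*ω)*d2*lam^2*S)*hT2
  · linear_combination (lam*T*S)*hJ3a + (lam*T*S^2)*hJ3b + (-24*c*σ*h2*lam^3*T*S)*hT2
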